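/- Let H : Ω → ℝ on a finite (or countable) configuration space Ω with Gibbs measure P_β(x) = e^{−βH(x)}/Z_β, and suppose events A_k (k ∈ ℕ₀) and a family of maps F_γ indexed by contours γ ∈ Γ satisfy: A_k = ⊔_{γ∈Γ} A_{k,γ} (disjoint union), each F_γ : A_{k,γ} → A_{k−1} is injective, and H(x) − H(F_γ(x)) ≥ |γ| for x ∈ A_{k,γ}. Then P_β(A_k) ≤ P_β(A_{k−1}) ∑_{γ∈Γ} e^{−β|γ|}, and iterating, P_β(A_k) ≤ (∑_{γ∈Γ} e^{−β|γ|})^k provided A_0 = Ω. -/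

import Mathlib

/-- Abstract Peierls argument. On a countable configuration space with Gibbs weights
`e^{−βH(x)}` and finite partition function, if the events `A_k` (for `k ≥ 1`) decompose as
disjoint unions `A_k = ⊔_γ A_{k,γ}` over contours `γ`, and there are injective maps
`F_γ : A_{k,γ} → A_{k−1}` with energy gain `H(x) − H(F_γ(x)) ≥ |γ|`, then
`P_β(A_k) ≤ P_β(A_{k−1}) ∑_γ e^{−β|γ|}`, and, if `A_0 = Ω`, iterating gives
`P_β(A_k) ≤ (∑_γ e^{−β|γ|})^k`. -/
theorem stmt13 {Ω : Type*} [Countable Ω] {Γ : Type*} [Countable Γ]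
    (H : Ω → ℝ) (β : ℝ) (hβ : 0 < β)
    (hZ : Summable fun x : Ω => Real.exp (-β * H x))
    (len : Γ → ℕ)
    (hΓ : Summable fun γ : Γ => Real.exp (-β * (len γ : ℝ)))
    (A : ℕ → Set Ω) (Asub : ℕ → Γ → Set Ω) (F : Γ → Ω → Ω)
    (hpart : ∀ k, 1 ≤ k → A k = ⋃ γ : Γ, Asub k γ)
    (hdisj : ∀ k, 1 ≤ k → ∀ γ γ' : Γ, γ ≠ γ' → Disjoint (Asub k γ) (Asub k γ'))
    (hmap : ∀ k, 1 ≤ k → ∀ γ : Γ, ∀ x ∈ Asub k γ, F γ x ∈ A (k - 1))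
    (hinj : ∀ k, 1 ≤ k → ∀ γ : Γ, Set.InjOn (F γ) (Asub k γ))
    (hen : ∀ k, 1 ≤ k → ∀ γ : Γ, ∀ x ∈ Asub k γ, (len γ : ℝ) ≤ H x - H (F γ x))
    (hA0 : A 0 = Set.univ) :
    let Z : ℝ := ∑' x : Ω, Real.exp (-β * H x)
    let P : Set Ω → ℝ := fun S => (∑' x : S, Real.exp (-β * H (x : Ω))) / Z
    (∀ k, 1 ≤ k →
        P (A k) ≤ P (A (k - 1)) * ∑' γ : Γ, Real.exp (-β * (len γ : ℝ))) ∧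
    ∀ k, P (A k) ≤ (∑' γ : Γ, Real.exp (-β * (len γ : ℝ))) ^ k := by
  intro Z P
  have hwpos : ∀ x : Ω, 0 < Real.exp (-β * H x) := fun x => Real.exp_pos _
  set w : Ω → ℝ := fun x => Real.exp (-β * H x) with hw
  set v : Ω → ENNReal := fun x => ENNReal.ofReal (w x) with hv
  set c : Γ → ℝ := fun γ => Real.exp (-β * (len γ : ℝ)) with hc
  have hcpos : ∀ γ, 0 < c γ := fun γ => Real.exp_pos _
  set C : ℝ := ∑' γ, c γ with hC
  have hCnn : 0 ≤ C := tsum_nonneg fun γ => (hcpos γ).le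
  set m : Set Ω → ENNReal := fun S => ∑' x : S, v x with hm
  have hμ : ∀ S : Set Ω, m S = ENNReal.ofReal (∑' x : S, w x) := by
    intro S
    rw [ENNReal.ofReal_tsum_of_nonneg (f := fun x : S => w x) (fun x => (hwpos _).le) (hZ.subtype S)]
  have hμfin : ∀ S, m S ≠ ⊤ := fun S => by rw [hμ]; exact ENNReal.ofReal_ne_top
  have hsnn : ∀ S : Set Ω, 0 ≤ ∑' x : S, w x :=
    fun S => tsum_nonneg fun x => (hwpos _).le
  have hPdef : ∀ S, P S = (m S).toReal / Z := by
    intro S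
    rw [hμ, ENNReal.toReal_ofReal (hsnn S)]
  have hCe : ENNReal.ofReal C = ∑' γ, ENNReal.ofReal (c γ) :=
    ENNReal.ofReal_tsum_of_nonneg (fun γ => (hcpos γ).le) hΓ
  -- key bound in ENNReal
  have key : ∀ k, 1 ≤ k → m (A k) ≤ m (A (k - 1)) * ENNReal.ofReal C := by
    intro k hk
    have hsub : ∀ γ, m (Asub k γ) ≤ ENNReal.ofReal (c γ) * m (A (k - 1)) := by
      intro γ
      have step1 : ∀ x : Asub k γ, v x ≤ ENNReal.ofReal (c γ) * v (F γ x) := by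
        rintro ⟨x, hx⟩
        have hE := hen k hk γ x hx
        have h1 : w x ≤ c γ * w (F γ x) := by
          rw [hw, hc, ← Real.exp_add]
          apply Real.exp_le_exp.2
          nlinarith
        calc v x = ENNReal.ofReal (w x) := rfl
          _ ≤ ENNReal.ofReal (c γ * w (F γ x)) := ENNReal.ofReal_le_ofReal h1
          _ = ENNReal.ofReal (c γ) * v (F γ x) := ENNReal.ofReal_mul (hcpos γ).le
      have hinj' : Function.Injective
          (fun x : Asub k γ => (⟨F γ x, hmap k hk γ x x.2⟩ : A (k - 1))) := by
        rintro ⟨x, hx⟩ ⟨y, hy⟩ hxy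
        simp only [Subtype.mk.injEq] at hxy
        exact Subtype.ext (hinj k hk γ hx hy hxy)
      calc m (Asub k γ) ≤ ∑' x : Asub k γ, ENNReal.ofReal (c γ) * v (F γ x) :=
            ENNReal.tsum_le_tsum step1
        _ = ENNReal.ofReal (c γ) * ∑' x : Asub k γ, v (F γ x) := ENNReal.tsum_mul_left
        _ ≤ ENNReal.ofReal (c γ) * m (A (k - 1)) := by
            gcongr
            exact ENNReal.tsum_comp_le_tsum_of_injective hinj'
              (fun y : A (k - 1) => v y)
    calc m (A k) = ∑' x : (⋃ γ, Asub k γ : Set Ω), v x := by rw [hm, hpart k hk]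
      _ ≤ ∑' γ, m (Asub k γ) := ENNReal.tsum_iUnion_le_tsum v _
      _ ≤ ∑' γ, ENNReal.ofReal (c γ) * m (A (k - 1)) := ENNReal.tsum_le_tsum hsub
      _ = m (A (k - 1)) * ENNReal.ofReal C := by
          rw [ENNReal.tsum_mul_right, hCe, mul_comm]
  -- real version
  have keyR : ∀ k, 1 ≤ k → P (A k) ≤ P (A (k - 1)) * C := by
    intro k hk
    have hZnn : 0 ≤ Z := hsnn Set.univ |>.trans_eq (by rw [tsum_univ])
    rcases eq_or_lt_of_le hZnn with hZ0 | hZpos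
    · simp only [hPdef, ← hZ0, div_zero, zero_mul, le_refl]
    · have hreal : (m (A k)).toReal ≤ (m (A (k - 1))).toReal * C := by
        have := key k hk
        have h2 : (m (A k)).toReal ≤ (m (A (k - 1)) * ENNReal.ofReal C).toReal :=
          ENNReal.toReal_mono (by
            exact ENNReal.mul_ne_top (hμfin _) ENNReal.ofReal_ne_top) this
        rwa [ENNReal.toReal_mul, ENNReal.toReal_ofReal hCnn] at h2
      rw [hPdef, hPdef, div_mul_eq_mul_div]
      gcongr
  refine ⟨keyR, ?_⟩
  intro k
  induction k with
  | zero =>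
    rw [hPdef, pow_zero, hA0]
    have : (m Set.univ).toReal = Z := by
      rw [hμ, ENNReal.toReal_ofReal (hsnn _)]
      exact tsum_univ w
    rw [this]
    exact div_self_le_one Z
  | succ n ih =>
    have h := keyR (n + 1) (by omega)
    simp only [Nat.add_sub_cancel] at h
    calc P (A (n + 1)) ≤ P (A n) * C := h
      _ ≤ C ^ n * C := mul_le_mul_of_nonneg_right ih hCnn
      _ = C ^ (n + 1) := (pow_succ C n).symm
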